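/- Suppose x and x̂ solve the n-cycle solution systems of S and of S with its 0-th symbol flipped, respectively. Then det(I - M_S)·(e₁ᵀx) = det(I - M_{S^{0̄}})·(e₁ᵀx̂). -/

import Mathlib

open Matrix

/-- A symbol sequence of length `n`: `true` codes `L`, `false` codes `R`. -/
def SymbolSeq (n : ℕ) := ZMod n → Bool

/-- The stability matrix built from the first `k` symbols:
`Mmat A S k = A_{S_{k-1}} ⋯ A_{S_0}`; the stability matrix of `S` is
`M_S = Mmat A S n`. -/
def Mmat {N n : ℕ} (A : Bool → Matrix (Fin (N + 1)) (Fin (N + 1)) ℝ)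
    (S : SymbolSeq n) : ℕ → Matrix (Fin (N + 1)) (Fin (N + 1)) ℝ
  | 0 => 1
  | k + 1 => A (S (k : ZMod n)) * Mmat A S k

/-- The border-collision matrix built from the first `k` symbols, via
`P_0 = 0`, `P_{k+1} = A_{S_k} P_k + I`; so
`P_S = Pmat A S n = I + A_{S_{n-1}} + ⋯ + A_{S_{n-1}}⋯A_{S_1}`. -/
def Pmat {N n : ℕ} (A : Bool → Matrix (Fin (N + 1)) (Fin (N + 1)) ℝ)
    (S : SymbolSeq n) : ℕ → Matrix (Fin (N + 1)) (Fin (N + 1)) ℝ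
  | 0 => 0
  | k + 1 => A (S (k : ZMod n)) * Pmat A S k + 1

/-- The iterates of `x₀` under the affine maps `x ↦ μb + A_{S_i} x` in the
order determined by `S`. -/
def orb {N n : ℕ} (A : Bool → Matrix (Fin (N + 1)) (Fin (N + 1)) ℝ)
    (S : SymbolSeq n) (b : Fin (N + 1) → ℝ) (μ : ℝ)
    (x₀ : Fin (N + 1) → ℝ) : ℕ → Fin (N + 1) → ℝ
  | 0 => x₀
  | k + 1 => μ • b + (A (S (k : ZMod n))).mulVec (orb A S b μ x₀ k)

/-- Flip (`L ↔ R`) the entry of `S` at index `i`. -/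
def flipAt {n : ℕ} (i : ZMod n) (S : SymbolSeq n) : SymbolSeq n :=
  fun j => if j = i then !(S j) else S j


lemma adj_row_zero_eq {N : ℕ} (B B' : Matrix (Fin (N+1)) (Fin (N+1)) ℝ)
    (h : ∀ i j, j ≠ 0 → B i j = B' i j) (j : Fin (N+1)) :
    adjugate B 0 j = adjugate B' 0 j := by
  rw [adjugate_apply, adjugate_apply]
  set C := B.updateRow j (Pi.single (0 : Fin (N+1)) 1) with hCdef
  set C' := B'.updateRow j (Pi.single (0 : Fin (N+1)) 1) with hC'def
  have hC' : C' = C.updateCol 0 (fun i => C' i 0) := by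
    ext i k
    rcases eq_or_ne k 0 with rfl | hk
    · simp [updateCol_apply]
    · rw [updateCol_apply, if_neg hk]
      rcases eq_or_ne i j with rfl | hi
      · simp [hCdef, hC'def]
      · simp [hCdef, hC'def, updateRow_apply, hi, h i k hk]
  have hdiff : det (C.updateCol 0 (fun i => C i 0 - C' i 0)) = 0 := by
    apply det_eq_zero_of_row_eq_zero j
    intro k
    rcases eq_or_ne k 0 with rfl | hk
    · simp [updateCol_apply, hCdef, hC'def]
    · simp [updateCol_apply, hk, hCdef, updateRow_apply, Pi.single_eq_of_ne hk]
  have hsplit : (fun i => C i 0) = (fun i => C' i 0) + (fun i => C i 0 - C' i 0) := by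
    funext i; simp
  calc det C = det (C.updateCol 0 (fun i => C i 0)) := by
        rw [updateCol_eq_self]
    _ = det (C.updateCol 0 (fun i => C' i 0)) := by
        rw [hsplit, det_updateCol_add, hdiff, add_zero]
    _ = det C' := by rw [← hC']

lemma natCast_zmod_ne_zero {n m : ℕ} (h0 : 0 < m) (hn : m < n) :
    ((m : ℕ) : ZMod n) ≠ 0 := by
  haveI : NeZero n := ⟨by omega⟩
  intro h
  have := ZMod.val_natCast_of_lt hn
  rw [h, ZMod.val_zero] at this
  omega

lemma flipAt_ne {n : ℕ} (S : SymbolSeq n) {m : ℕ} (h0 : 0 < m) (hn : m < n) :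
    flipAt 0 S (m : ZMod n) = S (m : ZMod n) := by
  unfold flipAt
  rw [if_neg (natCast_zmod_ne_zero h0 hn)]

lemma Pmat_flip {N n : ℕ} (A : Bool → Matrix (Fin (N + 1)) (Fin (N + 1)) ℝ)
    (S : SymbolSeq n) : ∀ m, m ≤ n → Pmat A (flipAt 0 S) m = Pmat A S m := by
  intro m
  induction m with
  | zero => intro _; rfl
  | succ m ih =>
    intro hm
    show A (flipAt 0 S (m : ZMod n)) * Pmat A (flipAt 0 S) m + 1
        = A (S (m : ZMod n)) * Pmat A S m + 1
    rcases Nat.eq_zero_or_pos m with rfl | hpos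
    · show _ * (0 : Matrix _ _ ℝ) + 1 = _ * (0 : Matrix _ _ ℝ) + 1
      simp
    · rw [ih (by omega), flipAt_ne S hpos (by omega)]

lemma Mmat_flip {N n : ℕ} (A : Bool → Matrix (Fin (N + 1)) (Fin (N + 1)) ℝ)
    (hAgree : ∀ j : Fin (N + 1), j ≠ 0 → ∀ i, A true i j = A false i j)
    (S : SymbolSeq n) :
    ∀ m, m ≤ n → ∀ i (j : Fin (N+1)), j ≠ 0 →
      Mmat A (flipAt 0 S) m i j = Mmat A S m i j := by
  have hA : ∀ b b' : Bool, ∀ i (j : Fin (N+1)), j ≠ 0 → A b i j = A b' i j := by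
    intro b b' i j hj
    cases b <;> cases b' <;> simp [hAgree j hj i]
  intro m
  induction m with
  | zero => intro _ i j hj; rfl
  | succ m ih =>
    intro hm i j hj
    show (A (flipAt 0 S (m : ZMod n)) * Mmat A (flipAt 0 S) m) i j
        = (A (S (m : ZMod n)) * Mmat A S m) i j
    rcases Nat.eq_zero_or_pos m with rfl | hpos
    · simp only [Mmat, mul_one]
      exact hA _ _ i j hj
    · rw [flipAt_ne S hpos (by omega), mul_apply, mul_apply]
      exact Finset.sum_congr rfl fun k _ => by rw [ih (by omega) k j hj]

/-- If `x` and `x̂` solve the `n`-cycle solution systems of `S` and of `S` with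
its `0`-th symbol flipped, then
`det(I - M_S)·(e₁ᵀx) = det(I - M_{S^0̄})·(e₁ᵀx̂)`. -/
theorem det_mul_first_component_eq {N n : ℕ}
    (A : Bool → Matrix (Fin (N + 1)) (Fin (N + 1)) ℝ)
    (hAgree : ∀ j : Fin (N + 1), j ≠ 0 → ∀ i, A true i j = A false i j)
    (S : SymbolSeq n) (b : Fin (N + 1) → ℝ) (μ : ℝ)
    (x xhat : Fin (N + 1) → ℝ)
    (hx : (1 - Mmat A S n).mulVec x = μ • (Pmat A S n).mulVec b)
    (hxhat : (1 - Mmat A (flipAt 0 S) n).mulVec xhat =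
      μ • (Pmat A (flipAt 0 S) n).mulVec b) :
    (1 - Mmat A S n).det * x 0 = (1 - Mmat A (flipAt 0 S) n).det * xhat 0 := by
  set B := 1 - Mmat A S n with hB
  set B' := 1 - Mmat A (flipAt 0 S) n with hB'
  set c := μ • (Pmat A S n).mulVec b with hc
  have hP : Pmat A (flipAt 0 S) n = Pmat A S n := Pmat_flip A S n le_rfl
  have hagree : ∀ i (j : Fin (N+1)), j ≠ 0 → B i j = B' i j := by
    intro i j hj
    simp only [hB, hB', Matrix.sub_apply, Mmat_flip A hAgree S n le_rfl i j hj]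
  have key1 : B.det • x = adjugate B *ᵥ c := by
    rw [← hx, mulVec_mulVec, adjugate_mul, smul_mulVec, one_mulVec]
  have key2 : B'.det • xhat = adjugate B' *ᵥ c := by
    rw [hc, ← hP, ← hxhat, mulVec_mulVec, adjugate_mul, smul_mulVec, one_mulVec]
  have e1 : B.det * x 0 = (adjugate B *ᵥ c) 0 := by
    rw [← key1]; rfl
  have e2 : B'.det * xhat 0 = (adjugate B' *ᵥ c) 0 := by
    rw [← key2]; rfl
  rw [e1, e2, mulVec, mulVec]
  refine Finset.sum_congr rfl fun j _ => ?_
  show B.adjugate 0 j * c j = B'.adjugate 0 j * c j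
  rw [adj_row_zero_eq B B' hagree j]
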